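/- arXiv:2411.09059 — 3 statements merged into one kernel-verified Lean document; each statement's English description precedes it below -/
import Mathlib

section
/- Let H be a multigraph on vertex set U_low, where for each set S in a family F̂ and each pair of distinct elements e, e' ∈ S ∩ U_low there is one edge (e,e') for each such set containing both. Then for any maximal matching M of H, we have (|U_low| - SC(U_low, F̂))/2 ≤ |M| ≤ |U_low| - SC(U_low, F̂), where SC(U_low, F̂) is the minimum number of sets of F̂ needed to cover U_low (assuming every element of U_low is contained in at least one set, e.g., singletons are available). -/
/-- For the auxiliary multigraph `H` on `U` built from the set family `F`
(one edge per set containing two distinct elements of `U`), any maximal matching `M`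
(represented as a set of triples `(e, e', S)` : the two endpoints and the witnessing set)
satisfies `(|U| - SC(U,F))/2 ≤ |M| ≤ |U| - SC(U,F)`. -/
theorem stmt0 {α : Type*} [DecidableEq α] (U : Finset α) (F : Finset (Finset α))
    (hcov : ∀ e ∈ U, ∃ S ∈ F, e ∈ S)
    (sc : ℕ)
    (hsc : IsLeast {m : ℕ | ∃ G ⊆ F, G.card = m ∧ ∀ e ∈ U, ∃ S ∈ G, e ∈ S} sc)
    (M : Finset (α × α × Finset α))
    (hM : ∀ x ∈ M, x.2.2 ∈ F ∧ x.1 ∈ x.2.2 ∧ x.2.1 ∈ x.2.2 ∧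
      x.1 ∈ U ∧ x.2.1 ∈ U ∧ x.1 ≠ x.2.1)
    (hdisj : ∀ x ∈ M, ∀ y ∈ M, x ≠ y →
      ({x.1, x.2.1} : Finset α) ∩ ({y.1, y.2.1} : Finset α) = ∅)
    (hmax : ∀ S ∈ F, ∀ e ∈ S ∩ U, ∀ e' ∈ S ∩ U, e ≠ e' →
      (∀ x ∈ M, e ∉ ({x.1, x.2.1} : Finset α) ∧ e' ∉ ({x.1, x.2.1} : Finset α)) → False) :
    U.card ≤ sc + 2 * M.card ∧ M.card + sc ≤ U.card := by
  classical
  obtain ⟨⟨G, hGF, hGcard, hGcov⟩, hleast⟩ := hsc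
  set V : Finset α := M.biUnion (fun x => ({x.1, x.2.1} : Finset α)) with hV
  have hVU : V ⊆ U := by
    intro v hv
    simp only [hV, Finset.mem_biUnion] at hv
    obtain ⟨x, hx, hvx⟩ := hv
    obtain ⟨_, _, _, h4, h5, _⟩ := hM x hx
    simp only [Finset.mem_insert, Finset.mem_singleton] at hvx
    rcases hvx with rfl | rfl <;> assumption
  have hVcard : V.card = 2 * M.card := by
    rw [hV, Finset.card_biUnion]
    · rw [Finset.sum_congr rfl (fun x hx => ?_), Finset.sum_const, smul_eq_mul, mul_comm]
      obtain ⟨_, _, _, _, _, hne⟩ := hM x hx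
      rw [Finset.card_insert_of_notMem (by simp [hne]), Finset.card_singleton]
    · intro x hx y hy hxy
      rw [Function.onFun, Finset.disjoint_iff_inter_eq_empty]
      exact hdisj x hx y hy hxy
  set W : Finset α := U \ V with hW
  have hVle : V.card ≤ U.card := Finset.card_le_card hVU
  have hUcard : U.card = W.card + 2 * M.card := by
    rw [hW, Finset.card_sdiff_of_subset hVU]
    omega
  have hWnotV : ∀ w ∈ W, ∀ x ∈ M, w ∉ ({x.1, x.2.1} : Finset α) := by
    intro w hw x hx hwx
    rw [hW, Finset.mem_sdiff] at hw
    exact hw.2 (Finset.mem_biUnion.mpr ⟨x, hx, hwx⟩)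
  have hWsc : W.card ≤ sc := by
    have hle : W.card ≤ G.card := by
      apply Finset.card_le_card_of_injOn (fun w => if h : ∃ S ∈ G, w ∈ S then h.choose else ∅)
      · intro w hw
        have hwU : w ∈ U := (Finset.mem_sdiff.mp hw).1
        have h : ∃ S ∈ G, w ∈ S := hGcov w hwU
        simp only [dif_pos h]
        exact h.choose_spec.1
      · intro w hw w' hw' heq
        by_contra hne
        have hwU : w ∈ U := (Finset.mem_sdiff.mp hw).1
        have hw'U : w' ∈ U := (Finset.mem_sdiff.mp hw').1
        have h : ∃ S ∈ G, w ∈ S := hGcov w hwU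
        have h' : ∃ S ∈ G, w' ∈ S := hGcov w' hw'U
        simp only [dif_pos h, dif_pos h'] at heq
        have hSG : h.choose ∈ G := h.choose_spec.1
        have hwS : w ∈ h.choose := h.choose_spec.2
        have hw'S : w' ∈ h.choose := heq ▸ h'.choose_spec.2
        exact hmax h.choose (hGF hSG) w (Finset.mem_inter.mpr ⟨hwS, hwU⟩) w'
          (Finset.mem_inter.mpr ⟨hw'S, hw'U⟩) hne
          (fun x hx => ⟨hWnotV w hw x hx, hWnotV w' hw' x hx⟩)
    omega
  have hsc2 : sc ≤ W.card + M.card := by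
    set f : α → Finset α := fun w => if h : ∃ S ∈ F, w ∈ S then h.choose else ∅ with hf
    have hcover : ∀ e ∈ U, ∃ S ∈ (W.image f ∪ M.image (fun x => x.2.2)), e ∈ S := by
      intro e he
      by_cases hev : e ∈ V
      · rw [hV, Finset.mem_biUnion] at hev
        obtain ⟨x, hx, hex⟩ := hev
        refine ⟨x.2.2, Finset.mem_union_right _ (Finset.mem_image_of_mem _ hx), ?_⟩
        obtain ⟨_, h2, h3, _⟩ := hM x hx
        simp only [Finset.mem_insert, Finset.mem_singleton] at hex
        rcases hex with rfl | rfl <;> assumption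
      · have heW : e ∈ W := Finset.mem_sdiff.mpr ⟨he, hev⟩
        have h : ∃ S ∈ F, e ∈ S := hcov e he
        refine ⟨f e, Finset.mem_union_left _ (Finset.mem_image_of_mem _ heW), ?_⟩
        simp only [hf, dif_pos h]
        exact h.choose_spec.2
    have hsub : (W.image f ∪ M.image (fun x => x.2.2)) ⊆ F := by
      intro S hS
      rcases Finset.mem_union.mp hS with hS | hS
      · obtain ⟨w, hw, rfl⟩ := Finset.mem_image.mp hS
        have h : ∃ S ∈ F, w ∈ S := hcov w (Finset.mem_sdiff.mp hw).1
        simp only [hf, dif_pos h]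
        exact h.choose_spec.1
      · obtain ⟨x, hx, rfl⟩ := Finset.mem_image.mp hS
        exact (hM x hx).1
    have hmem := hleast ⟨_, hsub, rfl, hcover⟩
    calc sc ≤ _ := hmem
      _ ≤ W.card + M.card := le_trans (Finset.card_union_le _ _)
          (add_le_add Finset.card_image_le Finset.card_image_le)
  constructor <;> omega
end

section
/- Let H be a multigraph, π a permutation of its edges, and consider the edge oracle EO(e, v, π) which recursively queries the incident edges of e at endpoint v with rank smaller than π(e) in increasing rank order, returning true iff none of them recursively returns true (i.e., e is in the greedy maximal matching). Then EO(e, v, π) = true if and only if e belongs to the greedy maximal matching of H with respect to π. -/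
/-- Two edges of the multigraph (edge indices with endpoint map `ends`) share an endpoint. -/
def Shares {V E : Type*} (ends : E → V × V) (e f : E) : Prop :=
  (ends e).1 = (ends f).1 ∨ (ends e).1 = (ends f).2 ∨
  (ends e).2 = (ends f).1 ∨ (ends e).2 = (ends f).2

/-- Incidence between distinct edges of a multigraph. -/
def Incident {V E : Type*} (ends : E → V × V) (e f : E) : Prop :=
  e ≠ f ∧ Shares ends e f

/-- if `EO` satisfies the recursive specification of the edge oracle
(`EO e` holds iff no incident edge of strictly smaller rank has `EO`), and `M` is the
greedy maximal matching w.r.t. the ranks `π` (characterized by the same fixpoint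
property of greedily processing edges in increasing rank order), then
`EO e = true` iff `e ∈ RGMM(H, π)`. -/
theorem stmt3 {V E : Type*} (ends : E → V × V) (π : E → ℕ)
    (hπ : Function.Injective π)
    (EO : E → Prop)
    (hEO : ∀ e, EO e ↔ ∀ f, Incident ends e f → π f < π e → ¬ EO f)
    (M : Set E)
    (hM : ∀ e, e ∈ M ↔ ∀ f, Incident ends e f → π f < π e → f ∉ M) :
    ∀ e, EO e ↔ e ∈ M := by
  have key : ∀ n, ∀ e, π e < n → (EO e ↔ e ∈ M) := by
    intro n
    induction n using Nat.strong_induction_on with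
    | _ n ih =>
      intro e he
      rw [hEO e, hM e]
      constructor
      · intro h f hf hlt hfM
        exact h f hf hlt ((ih (π e) he f hlt).mpr hfM)
      · intro h f hf hlt hfEO
        exact h f hf hlt ((ih (π e) he f hlt).mp hfEO)
  exact fun e => key (π e + 1) e (Nat.lt_succ_self _)
end

section
/- Let π₁, π₂ be two permutations of the edges of a multigraph H and let P⃗₁ = (e⃗_{k₁}, ..., e⃗₁) and P⃗₂ = (e⃗'_{k₂}, ..., e⃗'₁) be query paths of the local RGMM oracle under π₁ and π₂ respectively, both ending at the same directed edge e⃗ = e⃗₁ = e⃗'₁, with f(π₁, P⃗₁) = f(π₂, P⃗₂). Suppose e_j = e'_j for all j ≤ i, e_{i+1} ≠ e'_{i+1}, and π₁(e_i) ≤ π₂(e_i). Then π₂(e_{i+1}) = π₁(e_i) < π₂(e_i), and for every edge ê with min(π₁(ê), π₂(ê)) < π₁(e_i) we have π₁(ê) = π₂(ê). -/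
def IsGreedyMM {V E : Type*} (ends : E → V × V) (π : E → ℕ) (M : Set E) : Prop :=
  ∀ e, e ∈ M ↔ ∀ f, Incident ends e f → π f < π e → f ∉ M

/-- Query path of the local RGMM oracle, in stack order (first-stored edge first, ranks
strictly decreasing along the list; the last entry is the deepest edge `e₁`). -/
def IsQueryPath {V E : Type*} (ends : E → V × V) (π : E → ℕ) (M : Set E)
    (P : List E) : Prop :=
  P ≠ [] ∧ P.Chain' (fun a b => Incident ends a b ∧ π b < π a ∧
    ∀ f, Incident ends a f → π f < π b → f ∉ M)

/-- The cyclic-shift map `f(π, P)`: each edge of `P` gets the rank of the next edge of `P`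
in list order (the last edge gets the rank of the first); other edges keep their rank. -/
def cyclicShift {E : Type*} [DecidableEq E] (π : E → ℕ) (P : List E) (x : E) : ℕ :=
  if x ∈ P then
    if h : P.idxOf x + 1 < P.length then π (P.get ⟨P.idxOf x + 1, h⟩)
    else π (P.getD 0 x)
  else π x

private lemma cs_not_mem {E : Type*} [DecidableEq E] (π : E → ℕ) (P : List E) {x : E}
    (h : x ∉ P) : cyclicShift π P x = π x := by
  simp [cyclicShift, h]

private lemma cs_eval {E : Type*} [DecidableEq E] (π : E → ℕ) (P : List E)
    (hnd : P.Nodup) {m : ℕ} {x y : E} (hm : 1 ≤ m)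
    (hx : P.reverse[m]? = some x) (hy : P.reverse[m - 1]? = some y) :
    cyclicShift π P x = π y := by
  obtain ⟨hm', hx'⟩ := List.getElem?_eq_some_iff.mp hx
  obtain ⟨hm'', hy'⟩ := List.getElem?_eq_some_iff.mp hy
  rw [List.getElem_reverse] at hx' hy'
  have hlen : m < P.length := by simpa using hm'
  have hmem : x ∈ P := by rw [← hx']; exact List.getElem_mem _
  have h1 : P.idxOf x < P.length := List.idxOf_lt_length_iff.2 hmem
  have hidx : P.idxOf x = P.length - 1 - m := by
    have h2 := List.getElem_idxOf h1
    exact (hnd.getElem_inj_iff).mp (h2.trans hx'.symm)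
  have hlt : P.idxOf x + 1 < P.length := by omega
  rw [cyclicShift, if_pos hmem, dif_pos hlt]
  have hj : P.idxOf x + 1 = P.length - 1 - (m - 1) := by omega
  have h5 : P[P.idxOf x + 1]? = some y := by
    rw [hj, List.getElem?_eq_getElem (by omega)]
    exact congrArg some hy'
  obtain ⟨_, h6⟩ := List.getElem?_eq_some_iff.mp h5
  simp only [List.get_eq_getElem]
  rw [h6]

/-- let `P₁ = (e_{k₁}, …, e₁)` and `P₂ = (e'_{k₂}, …, e'₁)` be query paths
under `π₁`, `π₂` ending at the same edge `e = e₁ = e'₁`, with `f(π₁,P₁) = f(π₂,P₂)`.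
(Here `P.reverse[j]?` is the `(j+1)`-st edge from the end, i.e. `e_{j+1}`.) Suppose
`e_j = e'_j` for all `j ≤ i`, `e_{i+1} ≠ e'_{i+1}` (`a = e_{i+1}`, `b = e'_{i+1}`,
`c = e_i`), and `π₁(e_i) ≤ π₂(e_i)`. Then `π₂(e_{i+1}) = π₁(e_i) < π₂(e_i)`, and every
edge `ê` with `min(π₁(ê), π₂(ê)) < π₁(e_i)` satisfies `π₁(ê) = π₂(ê)`. -/
theorem stmt18 {V E : Type*} [DecidableEq E] (ends : E → V × V)
    (π₁ π₂ : E → ℕ) (hi1 : Function.Injective π₁) (hi2 : Function.Injective π₂)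
    (hrange : Set.range π₁ = Set.range π₂)
    (M₁ M₂ : Set E) (hM₁ : IsGreedyMM ends π₁ M₁) (hM₂ : IsGreedyMM ends π₂ M₂)
    (e : E) (P₁ P₂ : List E)
    (hP₁ : IsQueryPath ends π₁ M₁ P₁) (hP₂ : IsQueryPath ends π₂ M₂ P₂)
    (hend₁ : P₁.getLast? = some e) (hend₂ : P₂.getLast? = some e)
    (hf : cyclicShift π₁ P₁ = cyclicShift π₂ P₂)
    (i : ℕ) (hi : 1 ≤ i)
    (hagree : ∀ j, j < i → P₁.reverse[j]? = P₂.reverse[j]?)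
    (a b c : E)
    (ha : P₁.reverse[i]? = some a) (hb : P₂.reverse[i]? = some b) (hab : a ≠ b)
    (hc : P₁.reverse[i - 1]? = some c)
    (hle : π₁ c ≤ π₂ c) :
    π₂ a = π₁ c ∧ π₂ a < π₂ c ∧
      ∀ g : E, min (π₁ g) (π₂ g) < π₁ c → π₁ g = π₂ g := by
  classical
  obtain ⟨hne₁, hch₁⟩ := hP₁
  obtain ⟨hne₂, hch₂⟩ := hP₂
  haveI : IsTrans E (fun a b => π₁ b < π₁ a) := ⟨fun _ _ _ h1 h2 => h2.trans h1⟩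
  haveI : IsTrans E (fun a b => π₂ b < π₂ a) := ⟨fun _ _ _ h1 h2 => h2.trans h1⟩
  have hpw₁ : P₁.reverse.Pairwise (fun a b => π₁ a < π₁ b) := by
    rw [List.pairwise_reverse]
    exact List.isChain_iff_pairwise.mp (hch₁.imp fun _ _ h => h.2.1)
  have hpw₂ : P₂.reverse.Pairwise (fun a b => π₂ a < π₂ b) := by
    rw [List.pairwise_reverse]
    exact List.isChain_iff_pairwise.mp (hch₂.imp fun _ _ h => h.2.1)
  have hnd₁ : P₁.Nodup := by
    rw [← List.nodup_reverse]
    exact hpw₁.imp (fun h he => by rw [he] at h; exact absurd h (lt_irrefl _))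
  have hnd₂ : P₂.Nodup := by
    rw [← List.nodup_reverse]
    exact hpw₂.imp (fun h he => by rw [he] at h; exact absurd h (lt_irrefl _))
  set q₁ : ℕ → E := fun m => (P₁.reverse[m]?).getD e with hq₁def
  set q₂ : ℕ → E := fun m => (P₂.reverse[m]?).getD e with hq₂def
  have len₁ : i < P₁.length := by
    have := (List.getElem?_eq_some_iff.mp ha).1; simpa using this
  have len₂ : i < P₂.length := by
    have := (List.getElem?_eq_some_iff.mp hb).1; simpa using this
  have hq₁ : ∀ {m : ℕ}, m < P₁.length → P₁.reverse[m]? = some (q₁ m) := by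
    intro m hm
    rw [hq₁def]
    simp only []
    rw [List.getElem?_eq_getElem (by simpa using hm)]
    rfl
  have hq₂ : ∀ {m : ℕ}, m < P₂.length → P₂.reverse[m]? = some (q₂ m) := by
    intro m hm
    rw [hq₂def]
    simp only []
    rw [List.getElem?_eq_getElem (by simpa using hm)]
    rfl
  have ea : q₁ i = a := by simp [hq₁def, ha]
  have eb : q₂ i = b := by simp [hq₂def, hb]
  have ec : q₁ (i - 1) = c := by simp [hq₁def, hc]
  have agree : ∀ m, m < i → q₁ m = q₂ m := by
    intro m hm; simp [hq₁def, hq₂def, hagree m hm]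
  have ec₂ : q₂ (i - 1) = c := by rw [← agree (i - 1) (by omega), ec]
  have mono₁ : ∀ {m n : ℕ}, m < n → n < P₁.length → π₁ (q₁ m) < π₁ (q₁ n) := by
    intro m n hmn hn
    obtain ⟨hm', e1⟩ := List.getElem?_eq_some_iff.mp (hq₁ (show m < P₁.length by omega))
    obtain ⟨hn', e2⟩ := List.getElem?_eq_some_iff.mp (hq₁ hn)
    rw [← e1, ← e2]
    exact List.pairwise_iff_getElem.mp hpw₁ _ _ hm' hn' hmn
  have mono₂ : ∀ {m n : ℕ}, m < n → n < P₂.length → π₂ (q₂ m) < π₂ (q₂ n) := by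
    intro m n hmn hn
    obtain ⟨hm', e1⟩ := List.getElem?_eq_some_iff.mp (hq₂ (show m < P₂.length by omega))
    obtain ⟨hn', e2⟩ := List.getElem?_eq_some_iff.mp (hq₂ hn)
    rw [← e1, ← e2]
    exact List.pairwise_iff_getElem.mp hpw₂ _ _ hm' hn' hmn
  have cs₁ : ∀ {m : ℕ}, 1 ≤ m → m < P₁.length →
      cyclicShift π₁ P₁ (q₁ m) = π₁ (q₁ (m - 1)) :=
    fun hm hlt => cs_eval π₁ P₁ hnd₁ hm (hq₁ hlt) (hq₁ (by omega))
  have cs₂ : ∀ {m : ℕ}, 1 ≤ m → m < P₂.length →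
      cyclicShift π₂ P₂ (q₂ m) = π₂ (q₂ (m - 1)) :=
    fun hm hlt => cs_eval π₂ P₂ hnd₂ hm (hq₂ hlt) (hq₂ (by omega))
  have mem₁ : ∀ {x : E}, x ∈ P₁ → ∃ m, m < P₁.length ∧ q₁ m = x := by
    intro x hx
    rw [← List.mem_reverse] at hx
    obtain ⟨m, hm, hx'⟩ := List.getElem_of_mem hx
    refine ⟨m, by simpa using hm, ?_⟩
    simp [hq₁def, List.getElem?_eq_getElem hm, hx']
  have mem₂ : ∀ {x : E}, x ∈ P₂ → ∃ m, m < P₂.length ∧ q₂ m = x := by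
    intro x hx
    rw [← List.mem_reverse] at hx
    obtain ⟨m, hm, hx'⟩ := List.getElem_of_mem hx
    refine ⟨m, by simpa using hm, ?_⟩
    simp [hq₂def, List.getElem?_eq_getElem hm, hx']
  have memq₁ : ∀ {m : ℕ}, m < P₁.length → q₁ m ∈ P₁ := by
    intro m hm
    obtain ⟨h', e'⟩ := List.getElem?_eq_some_iff.mp (hq₁ hm)
    rw [← e']
    exact List.mem_reverse.mp (List.getElem_mem _)
  have memq₂ : ∀ {m : ℕ}, m < P₂.length → q₂ m ∈ P₂ := by
    intro m hm
    obtain ⟨h', e'⟩ := List.getElem?_eq_some_iff.mp (hq₂ hm)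
    rw [← e']
    exact List.mem_reverse.mp (List.getElem_mem _)
  -- ranks agree strictly below position i-1
  have prior : ∀ m, m + 2 ≤ i → π₁ (q₁ m) = π₂ (q₁ m) := by
    intro m hm2
    have h1 : cyclicShift π₁ P₁ (q₁ (m + 1)) = π₁ (q₁ m) := by
      have := cs₁ (m := m + 1) (by omega) (by omega)
      simpa using this
    have h2 : cyclicShift π₂ P₂ (q₂ (m + 1)) = π₂ (q₂ m) := by
      have := cs₂ (m := m + 1) (by omega) (by omega)
      simpa using this
    have hq : q₁ (m + 1) = q₂ (m + 1) := agree _ (by omega)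
    have hq' : q₁ m = q₂ m := agree _ (by omega)
    calc π₁ (q₁ m) = cyclicShift π₁ P₁ (q₁ (m + 1)) := h1.symm
      _ = cyclicShift π₂ P₂ (q₂ (m + 1)) := by rw [hf, hq]
      _ = π₂ (q₂ m) := h2
      _ = π₂ (q₁ m) := by rw [hq']
  have hfa : cyclicShift π₁ P₁ a = π₁ c := by
    rw [← ea, cs₁ hi len₁, ec]
  have h2a : π₂ a = π₁ c := by
    by_cases hmem : a ∈ P₂
    · exfalso
      obtain ⟨m, hm, hqm⟩ := mem₂ hmem
      have hmi : m ≠ i := fun h => hab (by rw [← hqm, h, eb])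
      have hm_ge : i + 1 ≤ m := by
        rcases lt_or_ge m i with hlt | hge
        · exfalso
          have hlt2 : π₁ (q₁ m) < π₁ (q₁ i) := mono₁ hlt len₁
          rw [agree m hlt, hqm, ea] at hlt2
          exact lt_irrefl _ hlt2
        · omega
      have hcs := cs₂ (m := m) (by omega) hm
      rw [hqm, ← hf, hfa] at hcs
      have hgt : π₂ (q₂ (i - 1)) < π₂ (q₂ (m - 1)) := mono₂ (by omega) (by omega)
      rw [ec₂] at hgt
      omega
    · calc π₂ a = cyclicShift π₂ P₂ a := (cs_not_mem π₂ P₂ hmem).symm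
        _ = cyclicShift π₁ P₁ a := by rw [hf]
        _ = π₁ c := hfa
  have hac : a ≠ c := by
    intro h
    have hlt2 := mono₁ (show i - 1 < i by omega) len₁
    rw [ea, ec, h] at hlt2
    exact lt_irrefl _ hlt2
  have hcc : π₁ c < π₂ c :=
    lt_of_le_of_ne hle (fun h => hac (hi2 (by rw [h2a, h])))
  refine ⟨h2a, by omega, ?_⟩
  intro g hg
  rcases min_lt_iff.mp hg with hg1 | hg2
  · -- π₁ g < π₁ c
    by_cases hm1 : g ∈ P₁
    · obtain ⟨m, hm, hqm⟩ := mem₁ hm1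
      have hmlt : m + 2 ≤ i := by
        by_contra hcon
        rcases Nat.eq_or_lt_of_le (show i - 1 ≤ m by omega) with h | h
        · rw [← h, ec] at hqm; rw [← hqm] at hg1; omega
        · have := mono₁ h hm
          rw [ec, hqm] at this
          omega
      have := prior m hmlt
      rw [hqm] at this
      exact this
    · by_cases hm2 : g ∈ P₂
      · exfalso
        obtain ⟨m, hm, hqm⟩ := mem₂ hm2
        have hm_ge : i ≤ m := by
          by_contra hcon
          exact hm1 (by rw [← hqm, ← agree m (by omega)]; exact memq₁ (by omega))
        have hcs := cs₂ (m := m) (by omega) hm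
        rw [hqm, ← hf, cs_not_mem π₁ P₁ hm1] at hcs
        have hge : π₂ (q₂ (i - 1)) ≤ π₂ (q₂ (m - 1)) := by
          rcases Nat.eq_or_lt_of_le (show i - 1 ≤ m - 1 by omega) with h | h
          · rw [h]
          · exact le_of_lt (mono₂ h (by omega))
        rw [ec₂] at hge
        omega
      · calc π₁ g = cyclicShift π₁ P₁ g := (cs_not_mem π₁ P₁ hm1).symm
          _ = cyclicShift π₂ P₂ g := by rw [hf]
          _ = π₂ g := cs_not_mem π₂ P₂ hm2
  · -- π₂ g < π₁ c
    by_cases hm2 : g ∈ P₂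
    · obtain ⟨m, hm, hqm⟩ := mem₂ hm2
      have hmlt : m + 2 ≤ i := by
        by_contra hcon
        rcases Nat.eq_or_lt_of_le (show i - 1 ≤ m by omega) with h | h
        · rw [← h, ec₂] at hqm; rw [← hqm] at hg2; omega
        · have := mono₂ h hm
          rw [ec₂, hqm] at this
          omega
      have hpr := prior m hmlt
      rw [agree m (by omega), hqm] at hpr
      exact hpr
    · by_cases hm1 : g ∈ P₁
      · exfalso
        obtain ⟨m, hm, hqm⟩ := mem₁ hm1
        have hm_ge : i ≤ m := by
          by_contra hcon
          exact hm2 (by rw [← hqm, agree m (by omega)]; exact memq₂ (by omega))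
        have hcs := cs₁ (m := m) (by omega) hm
        rw [hqm, hf, cs_not_mem π₂ P₂ hm2] at hcs
        have hge : π₁ (q₁ (i - 1)) ≤ π₁ (q₁ (m - 1)) := by
          rcases Nat.eq_or_lt_of_le (show i - 1 ≤ m - 1 by omega) with h | h
          · rw [h]
          · exact le_of_lt (mono₁ h (by omega))
        rw [ec] at hge
        omega
      · calc π₁ g = cyclicShift π₁ P₁ g := (cs_not_mem π₁ P₁ hm1).symm
          _ = cyclicShift π₂ P₂ g := by rw [hf]
          _ = π₂ g := cs_not_mem π₂ P₂ hm2
end
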